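/- arXiv:1309.4759 — 3 statements merged into one kernel-verified Lean document; each statement's English description precedes it below -/
import Mathlib

section
/- Let R be a commutative ℂ-algebra and σ, ω, σ̄ ∈ R. For complex numbers η, ζ, α, β with ζ ≠ 0, |η|² := ηη̄, suppose α = (ζ+η)/(1−η̄ζ) and β = (−ζ+η)/(1+η̄ζ) with 1−η̄²ζ² ≠ 0 and α ≠ β. Then (σ − (α+β)ω − αβσ̄)/(i(α−β)) = (σ − 2ηω − η²σ̄)/(2iζ(1+|η|²)) − iζ(σ̄ − 2η̄ω − η̄²σ)/(2(1+|η|²)). -/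
set_option maxHeartbeats 1000000 in
/-- under the Möbius relations `α = (ζ+η)/(1−η̄ζ)`,
`β = (−ζ+η)/(1+η̄ζ)`, one has
`(σ − (α+β)ω − αβσ̄)/(i(α−β)) = (σ − 2ηω − η²σ̄)/(2iζ(1+|η|²)) − iζ(σ̄ − 2η̄ω − η̄²σ)/(2(1+|η|²))`. -/
theorem stmt_12 {R : Type*} [CommRing R] [Algebra ℂ R]
    (σ ω σb : R) (η ζ α β : ℂ) (hζ : ζ ≠ 0)
    (hd1 : 1 - (starRingEnd ℂ) η * ζ ≠ 0) (hd2 : 1 + (starRingEnd ℂ) η * ζ ≠ 0)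
    (hd3 : 1 - ((starRingEnd ℂ) η) ^ 2 * ζ ^ 2 ≠ 0)
    (hα : α = (ζ + η) / (1 - (starRingEnd ℂ) η * ζ))
    (hβ : β = (-ζ + η) / (1 + (starRingEnd ℂ) η * ζ))
    (hαβ : α ≠ β) :
    algebraMap ℂ R (1 / (Complex.I * (α - β)))
        * (σ - algebraMap ℂ R (α + β) * ω - algebraMap ℂ R (α * β) * σb)
      = algebraMap ℂ R (1 / (2 * Complex.I * ζ * (1 + η * (starRingEnd ℂ) η)))
            * (σ - algebraMap ℂ R (2 * η) * ω - algebraMap ℂ R (η ^ 2) * σb)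
        - algebraMap ℂ R (Complex.I * ζ / (2 * (1 + η * (starRingEnd ℂ) η)))
            * (σb - algebraMap ℂ R (2 * (starRingEnd ℂ) η) * ω
                - algebraMap ℂ R (((starRingEnd ℂ) η) ^ 2) * σ) := by
  have hn : (1 : ℂ) + η * (starRingEnd ℂ) η ≠ 0 := by
    rw [Complex.mul_conj]
    intro h
    have h2 : (1 + Complex.normSq η : ℝ) = 0 := by exact_mod_cast h
    nlinarith [Complex.normSq_nonneg η]
  have hI : Complex.I ≠ 0 := Complex.I_ne_zero
  have hsub : α - β = 2 * ζ * (1 + η * (starRingEnd ℂ) η)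
      / (1 - ((starRingEnd ℂ) η) ^ 2 * ζ ^ 2) := by
    rw [hα, hβ, div_sub_div _ _ hd1 hd2, div_eq_div_iff (mul_ne_zero hd1 hd2) hd3]; ring
  have hadd : α + β = 2 * (η + (starRingEnd ℂ) η * ζ ^ 2)
      / (1 - ((starRingEnd ℂ) η) ^ 2 * ζ ^ 2) := by
    rw [hα, hβ, div_add_div _ _ hd1 hd2, div_eq_div_iff (mul_ne_zero hd1 hd2) hd3]; ring
  have hmul : α * β = (η ^ 2 - ζ ^ 2) / (1 - ((starRingEnd ℂ) η) ^ 2 * ζ ^ 2) := by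
    rw [hα, hβ, div_mul_div_comm, div_eq_div_iff (mul_ne_zero hd1 hd2) hd3]; ring
  have hσ : 1 / (Complex.I * (α - β))
      = 1 / (2 * Complex.I * ζ * (1 + η * (starRingEnd ℂ) η))
        + Complex.I * ζ / (2 * (1 + η * (starRingEnd ℂ) η)) * ((starRingEnd ℂ) η) ^ 2 := by
    rw [hsub]
    field_simp
    linear_combination (-ζ^2*((starRingEnd ℂ) η)^2) * Complex.I_sq
  have hω : 1 / (Complex.I * (α - β)) * (α + β)
      = 1 / (2 * Complex.I * ζ * (1 + η * (starRingEnd ℂ) η)) * (2 * η)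
        - Complex.I * ζ / (2 * (1 + η * (starRingEnd ℂ) η)) * (2 * (starRingEnd ℂ) η) := by
    rw [hsub, hadd]
    field_simp
    rw [mul_div_cancel_left₀ _ (by contrapose! hd3; linear_combination hd3 :
      (1 - ζ ^ 2 * (starRingEnd ℂ) η ^ 2) ≠ 0)]
    linear_combination (ζ^2*((starRingEnd ℂ) η)) * Complex.I_sq
  have hσb : 1 / (Complex.I * (α - β)) * (α * β)
      = 1 / (2 * Complex.I * ζ * (1 + η * (starRingEnd ℂ) η)) * (η ^ 2)
        + Complex.I * ζ / (2 * (1 + η * (starRingEnd ℂ) η)) := by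
    rw [hsub, hmul]
    field_simp
    rw [mul_div_cancel_left₀ _ (by contrapose! hd3; linear_combination hd3 :
      (1 - ζ ^ 2 * (starRingEnd ℂ) η ^ 2) ≠ 0)]
    linear_combination (-ζ^2) * Complex.I_sq
  have key : ∀ (x y z : R) (a b c : ℂ),
      algebraMap ℂ R a * (x - algebraMap ℂ R b * y - algebraMap ℂ R c * z)
        = algebraMap ℂ R a * x - algebraMap ℂ R (a * b) * y - algebraMap ℂ R (a * c) * z := by
    intro x y z a b c
    rw [map_mul, map_mul]; ring
  rw [key, key, key, hω, hσb, hσ]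
  simp only [map_add, map_sub, map_mul]
  ring
end

section
/- Let V be a real inner product space and I₊, I₋ orthogonal complex structures on V (I_±² = −id, g(I_±X, I_±Y) = g(X,Y)), with ω_± := g∘I_± : V → V* the associated Hermitian forms. Define on V ⊕ V* the endomorphisms 𝒥 = (1/2)·[[−(I₊+I₋), −(ω₊⁻¹−ω₋⁻¹)], [ω₊−ω₋, I₊*+I₋*]] and 𝒥′ = (1/2)·[[−(I₊−I₋), −(ω₊⁻¹+ω₋⁻¹)], [ω₊+ω₋, I₊*−I₋*]]. Then 𝒥² = 𝒥′² = −id and 𝒥𝒥′ = 𝒥′𝒥. -/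
/-- for orthogonal complex structures `I₊, I₋` on an inner
product space `(V, g)`, with `ω_± = g∘I_±` (invertible, inverses given), the
Gualtieri endomorphisms `𝒥, 𝒥′` of `V ⊕ V*` satisfy `𝒥² = 𝒥′² = −id` and
`𝒥𝒥′ = 𝒥′𝒥`. -/
theorem stmt_15 {V : Type*} [AddCommGroup V] [Module ℝ V]
    (g : V →ₗ[ℝ] Module.Dual ℝ V)
    (Ip Im : V →ₗ[ℝ] V)
    (hIp : ∀ x, Ip (Ip x) = -x) (hIm : ∀ x, Im (Im x) = -x)
    (horthp : ∀ x y, g (Ip x) (Ip y) = g x y)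
    (horthm : ∀ x y, g (Im x) (Im y) = g x y)
    (ωp ωm : V →ₗ[ℝ] Module.Dual ℝ V)
    (hωp : ωp = g ∘ₗ Ip) (hωm : ωm = g ∘ₗ Im)
    (ωpinv ωminv : Module.Dual ℝ V →ₗ[ℝ] V)
    (hp1 : ∀ ξ, ωp (ωpinv ξ) = ξ) (hp2 : ∀ x, ωpinv (ωp x) = x)
    (hm1 : ∀ ξ, ωm (ωminv ξ) = ξ) (hm2 : ∀ x, ωminv (ωm x) = x) :
    let J : V × Module.Dual ℝ V → V × Module.Dual ℝ V := fun p =>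
      ((1 / 2 : ℝ) • (-(Ip p.1 + Im p.1) - (ωpinv p.2 - ωminv p.2)),
       (1 / 2 : ℝ) • ((ωp p.1 - ωm p.1) + (Ip.dualMap p.2 + Im.dualMap p.2)))
    let J' : V × Module.Dual ℝ V → V × Module.Dual ℝ V := fun p =>
      ((1 / 2 : ℝ) • (-(Ip p.1 - Im p.1) - (ωpinv p.2 + ωminv p.2)),
       (1 / 2 : ℝ) • ((ωp p.1 + ωm p.1) + (Ip.dualMap p.2 - Im.dualMap p.2)))
    ∀ p : V × Module.Dual ℝ V,
      J (J p) = -p ∧ J' (J' p) = -p ∧ J (J' p) = J' (J p) := by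
  subst hωp hωm
  -- basic consequences
  simp only [LinearMap.comp_apply] at hp1 hp2 hm1 hm2
  have h1 : ∀ y, ωpinv (g y) = -Ip y := by
    intro y
    have : g y = -(g (Ip (Ip y))) := by rw [hIp]; simp
    rw [this, map_neg, hp2]
  have h2 : ∀ y, ωminv (g y) = -Im y := by
    intro y
    have : g y = -(g (Im (Im y))) := by rw [hIm]; simp
    rw [this, map_neg, hm2]
  have ginj : ∀ a b, g a = g b → a = b := by
    intro a b hab
    have := congrArg ωpinv hab
    rw [h1, h1] at this
    have h3 : Ip a = Ip b := by
      have := congrArg Neg.neg this; simpa using this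
    have := congrArg Ip h3
    rw [hIp, hIp] at this
    simpa using this
  have e6 : ∀ ξ, Im (ωminv ξ) = Ip (ωpinv ξ) := by
    intro ξ
    exact ginj _ _ (by rw [hm1, hp1])
  have e7 : ∀ ξ, Im (Ip (ωpinv ξ)) = -(ωminv ξ) := by
    intro ξ
    rw [← e6, hIm]
  have e5p : ∀ ξ, Ip.dualMap ξ = g (ωpinv ξ) := by
    intro ξ
    apply LinearMap.ext; intro y
    have h : ξ = g (Ip (ωpinv ξ)) := (hp1 ξ).symm
    rw [LinearMap.dualMap_apply]
    conv_lhs => rw [h]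
    rw [horthp]
  have e5m : ∀ ξ, Im.dualMap ξ = g (ωminv ξ) := by
    intro ξ
    apply LinearMap.ext; intro y
    have h : ξ = g (Im (ωminv ξ)) := (hm1 ξ).symm
    rw [LinearMap.dualMap_apply]
    conv_lhs => rw [h]
    rw [horthm]
  have e8 : ∀ ξ, g (Ip (ωpinv ξ)) = ξ := hp1
  intro J J' p
  obtain ⟨x, ξ⟩ := p
  refine ⟨?_, ?_, ?_⟩ <;>
  · simp only [J, J', LinearMap.comp_apply, e5p, e5m, map_add, map_sub, map_neg, map_smul, h1, h2,
      hIp, hIm, e6, e7, e8, smul_add, smul_sub, smul_neg, Prod.neg_mk,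
      Prod.mk.injEq]
    constructor <;> module
end

section
/- With notation as in the bi-Hermitian construction (𝒥, 𝒥′ defined from orthogonal complex structures I₊, I₋ on an inner product space (V,g)), the bilinear form G(e₁,e₂) := −⟨𝒥e₁, 𝒥′e₂⟩ on V ⊕ V*, where ⟨X+ξ, Y+η⟩ = (1/2)(ξ(Y)+η(X)), satisfies G(X+ξ, Y+η) = (1/2)(g(X,Y) + g⁻¹(ξ,η)); in particular G is symmetric and positive definite. -/
/-- with `𝒥, 𝒥′` defined from a pair of `g`-orthogonal complex
structures `I₊, I₋`, the form `G(e₁,e₂) := −⟨𝒥e₁, 𝒥′e₂⟩` on `V ⊕ V*`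
(where `⟨X+ξ, Y+η⟩ = (1/2)(ξ(Y)+η(X))`) satisfies
`G(X+ξ, Y+η) = (1/2)(g(X,Y) + g⁻¹(ξ,η))`; in particular `G` is symmetric and
positive definite. -/
theorem stmt_16 {V : Type*} [AddCommGroup V] [Module ℝ V]
    (g : V →ₗ[ℝ] Module.Dual ℝ V)
    (hgsymm : ∀ x y, g x y = g y x)
    (hgpos : ∀ x, x ≠ 0 → 0 < g x x)
    (ginv : Module.Dual ℝ V →ₗ[ℝ] V)
    (hg1 : ∀ ξ, g (ginv ξ) = ξ) (hg2 : ∀ x, ginv (g x) = x)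
    (Ip Im : V →ₗ[ℝ] V)
    (hIp : ∀ x, Ip (Ip x) = -x) (hIm : ∀ x, Im (Im x) = -x)
    (horthp : ∀ x y, g (Ip x) (Ip y) = g x y)
    (horthm : ∀ x y, g (Im x) (Im y) = g x y)
    (ωp ωm : V →ₗ[ℝ] Module.Dual ℝ V)
    (hωp : ωp = g ∘ₗ Ip) (hωm : ωm = g ∘ₗ Im)
    (ωpinv ωminv : Module.Dual ℝ V →ₗ[ℝ] V)
    (hp1 : ∀ ξ, ωp (ωpinv ξ) = ξ) (hp2 : ∀ x, ωpinv (ωp x) = x)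
    (hm1 : ∀ ξ, ωm (ωminv ξ) = ξ) (hm2 : ∀ x, ωminv (ωm x) = x) :
    let J : V × Module.Dual ℝ V → V × Module.Dual ℝ V := fun p =>
      ((1 / 2 : ℝ) • (-(Ip p.1 + Im p.1) - (ωpinv p.2 - ωminv p.2)),
       (1 / 2 : ℝ) • ((ωp p.1 - ωm p.1) + (Ip.dualMap p.2 + Im.dualMap p.2)))
    let J' : V × Module.Dual ℝ V → V × Module.Dual ℝ V := fun p =>
      ((1 / 2 : ℝ) • (-(Ip p.1 - Im p.1) - (ωpinv p.2 + ωminv p.2)),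
       (1 / 2 : ℝ) • ((ωp p.1 + ωm p.1) + (Ip.dualMap p.2 - Im.dualMap p.2)))
    let pair : V × Module.Dual ℝ V → V × Module.Dual ℝ V → ℝ := fun e f =>
      (1 / 2 : ℝ) * (e.2 f.1 + f.2 e.1)
    let G : V × Module.Dual ℝ V → V × Module.Dual ℝ V → ℝ := fun e f =>
      -pair (J e) (J' f)
    (∀ (X Y : V) (ξ η : Module.Dual ℝ V),
        G (X, ξ) (Y, η) = (1 / 2 : ℝ) * (g X Y + η (ginv ξ)))
    ∧ (∀ e f, G e f = G f e)
    ∧ (∀ e, e ≠ 0 → 0 < G e e) := by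
  subst hωp hωm
  intro J J' pair G
  have hkeyp : ∀ x y, g x (Ip y) = -(g (Ip x) y) := by
    intro x y
    have h := horthp x (Ip y)
    rw [hIp, map_neg] at h
    linarith
  have hkeym : ∀ x y, g x (Im y) = -(g (Im x) y) := by
    intro x y
    have h := horthm x (Im y)
    rw [hIm, map_neg] at h
    linarith
  have hC : ∀ a b, g (Im (Ip a)) b = g (Ip (Im b)) a := by
    intro a b
    rw [hgsymm, hkeym, hkeyp, neg_neg]
  have hωpinv : ∀ ξ, ωpinv ξ = -(Ip (ginv ξ)) := by
    intro ξ
    have h : (g ∘ₗ Ip) (-(Ip (ginv ξ))) = ξ := by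
      simp [LinearMap.comp_apply, hIp, hg1]
    conv_lhs => rw [← h, hp2]
  have hωminv : ∀ ξ, ωminv ξ = -(Im (ginv ξ)) := by
    intro ξ
    have h : (g ∘ₗ Im) (-(Im (ginv ξ))) = ξ := by
      simp [LinearMap.comp_apply, hIm, hg1]
    conv_lhs => rw [← h, hm2]
  have key : ∀ (X Y : V) (ξ η : Module.Dual ℝ V),
      G (X, ξ) (Y, η) = (1 / 2 : ℝ) * (g X Y + η (ginv ξ)) := by
    intro X Y ξ η
    obtain ⟨u, rfl⟩ : ∃ u, g u = ξ := ⟨ginv ξ, hg1 ξ⟩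
    obtain ⟨v, rfl⟩ : ∃ v, g v = η := ⟨ginv η, hg1 η⟩
    simp only [G, pair, J, J', hωpinv, hωminv, hg2, LinearMap.comp_apply,
      LinearMap.dualMap_apply, LinearMap.add_apply, LinearMap.sub_apply,
      LinearMap.neg_apply, LinearMap.smul_apply, map_add, map_sub, map_neg,
      map_smul, smul_eq_mul, hIp, hIm, hkeyp, hkeym, neg_neg]
    linarith [hC X Y, hC X v, hC u Y, hC u v, hC Y X, hC Y u, hC v X, hC v u,
      hgsymm X Y, hgsymm X v, hgsymm u Y, hgsymm u v]
  have hsym2 : ∀ ξ η : Module.Dual ℝ V, η (ginv ξ) = ξ (ginv η) := by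
    intro ξ η
    conv_lhs => rw [← hg1 η]
    conv_rhs => rw [← hg1 ξ]
    exact hgsymm _ _
  have hnn : ∀ x : V, (0 : ℝ) ≤ g x x := by
    intro x
    by_cases h : x = 0
    · simp [h]
    · exact (hgpos x h).le
  refine ⟨key, ?_, ?_⟩
  · rintro ⟨X, ξ⟩ ⟨Y, η⟩
    rw [key, key, hgsymm X Y, hsym2]
  · rintro ⟨X, ξ⟩ he
    rw [key]
    have hξ : ξ (ginv ξ) = g (ginv ξ) (ginv ξ) :=
      (DFunLike.congr_fun (hg1 ξ) (ginv ξ)).symm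
    rw [hξ]
    by_cases hX : X = 0
    · have hξ0 : ξ ≠ 0 := by
        intro h0
        exact he (by simp [Prod.ext_iff, hX, h0])
      have : ginv ξ ≠ 0 := by
        intro h0
        apply hξ0
        rw [← hg1 ξ, h0, map_zero]
      have := hgpos _ this
      have := hnn X
      linarith
    · have := hgpos X hX
      have := hnn (ginv ξ)
      linarith
end
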